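/- Let b ∈ C_A and let p be an extreme point of Q⋄_{A,0}. Then bᵀp = 0 if and only if Q_{A,b} ⊆ {x ∈ ℝ^d : a_iᵀx = b_i for all i ∈ I*_p}. -/
import Mathlib


open scoped RealInnerProductSpace

noncomputable section

/-- `Q_{A,b} = {x ∈ ℝ^d : a_iᵀx ≤ b_i for all i}`. -/
def Qset {d N : ℕ} (a : Fin N → EuclideanSpace ℝ (Fin d)) (b : Fin N → ℝ) :
    Set (EuclideanSpace ℝ (Fin d)) :=
  {x | ∀ i, ⟪a i, x⟫ ≤ b i}

/-- `C_A = {b : for every i there is x ∈ Q_{A,b} with a_iᵀx = b_i}`. -/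
def CA {d N : ℕ} (a : Fin N → EuclideanSpace ℝ (Fin d)) : Set (Fin N → ℝ) :=
  {b | ∀ i, ∃ x ∈ Qset a b, ⟪a i, x⟫ = b i}

/-- `Q⋄_{A,0} = {q ∈ ℝ^N : q ≥ 0, Aᵀq = 0, Σ q_i = 1}`. -/
def Qdiam {d N : ℕ} (a : Fin N → EuclideanSpace ℝ (Fin d)) : Set (Fin N → ℝ) :=
  {q | (∀ i, 0 ≤ q i) ∧ ∑ i, q i • a i = 0 ∧ ∑ i, q i = 1}

theorem stmt_12 (d N : ℕ) (hd : 1 ≤ d) (hN : 1 ≤ N)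
    (a : Fin N → EuclideanSpace ℝ (Fin d))
    (ha_inj : Function.Injective a) (ha_norm : ∀ i, ‖a i‖ = 1)
    (b : Fin N → ℝ) (hb : b ∈ CA a)
    (p : Fin N → ℝ) (hp : p ∈ (Qdiam a).extremePoints ℝ) :
    ∑ i, b i * p i = 0 ↔
      Qset a b ⊆ {x | ∀ i, 0 < p i → ⟪a i, x⟫ = b i} := by
  obtain ⟨⟨hp0, hpA, hps⟩, -⟩ := hp
  have key : ∀ x ∈ Qset a b, ∑ i, p i * ⟪a i, x⟫ = 0 := by
    intro x hx
    have : ∑ i, p i * ⟪a i, x⟫ = ⟪∑ i, p i • a i, x⟫ := by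
      rw [sum_inner]
      simp only [real_inner_smul_left]
    rw [this, hpA, inner_zero_left]
  constructor
  · intro hsum x hx i hpi
    have hsum2 : ∑ i, p i * (b i - ⟪a i, x⟫) = 0 := by
      have := key x hx
      calc ∑ i, p i * (b i - ⟪a i, x⟫)
          = ∑ i, b i * p i - ∑ i, p i * ⟪a i, x⟫ := by
            rw [← Finset.sum_sub_distrib]; congr 1; ext i; ring
        _ = 0 := by rw [hsum, this]; ring
    have hnn : ∀ j ∈ Finset.univ, 0 ≤ p j * (b j - ⟪a j, x⟫) := by
      intro j _
      exact mul_nonneg (hp0 j) (sub_nonneg.mpr (hx j))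
    have hz := (Finset.sum_eq_zero_iff_of_nonneg hnn).mp hsum2 i (Finset.mem_univ i)
    have : b i - ⟪a i, x⟫ = 0 := by
      rcases mul_eq_zero.mp hz with h | h
      · exact absurd h (ne_of_gt hpi)
      · exact h
    linarith
  · intro hsub
    obtain ⟨x, hx, -⟩ := hb ⟨0, hN⟩
    have hk := key x hx
    have he : ∀ i : Fin N, p i * (b i - ⟪a i, x⟫) = b i * p i - p i * ⟪a i, x⟫ :=
      fun i => by ring
    have : ∑ i, b i * p i = ∑ i, p i * (b i - ⟪a i, x⟫) := by
      rw [Finset.sum_congr rfl fun i _ => he i, Finset.sum_sub_distrib, hk, sub_zero]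
    rw [this]
    apply Finset.sum_eq_zero
    intro i _
    rcases lt_or_eq_of_le (hp0 i) with h | h
    · rw [hsub hx i h]; ring
    · rw [← h]; ring
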